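/- Let μ, ν be mutually absolutely continuous finite measures and suppose log(dν/dμ) ∈ BMO(μ) with the property that dμ/dν ∈ B_{p'}(ν) (reverse Hölder with exponent p' > 1 with respect to ν) and the John–Nirenberg inequality gives ((1/ν(B)) ∫_B |log(dμ/dν) - c_B|^p dν)^{1/p} ≤ C ‖log(dμ/dν)‖_{BMO(ν),CB} for c_B the ν-average over B. Then (1/μ(B)) ∫_B |log(dν/dμ) + c_B| dμ ≤ C' ‖log(dμ/dν)‖_{BMO(ν), Cr(B)} for every ball B. -/

import Mathlib

open MeasureTheory Metric Set

theorem log_density_bmo_transfer {X : Type*} [MetricSpace X] [MeasurableSpace X] [BorelSpace X]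
    (μ ν : Measure X) [IsFiniteMeasure μ] [IsFiniteMeasure ν]
    (w : X → ℝ) (hwpos : ∀ x, 0 < w x) (hwm : Measurable w)
    (hμν : μ = ν.withDensity (fun x => ENNReal.ofReal (w x)))
    (p p' C N : ℝ) (hp : 1 < p) (hp' : 1 < p') (hpp' : 1 / p + 1 / p' = 1)
    (hC : 0 < C) (hN : 0 ≤ N) :
    ∃ C' : ℝ, 0 < C' ∧ ∀ B : Set X, MeasurableSet B →
      0 < (ν B).toReal → 0 < (μ B).toReal →
      IntegrableOn (fun x => Real.log (w x)) B ν →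
      IntegrableOn
        (fun x => |Real.log (w x) - (ν B).toReal⁻¹ * ∫ y in B, Real.log (w y) ∂ν| ^ p) B ν →
      IntegrableOn (fun x => w x ^ p') B ν →
      -- John--Nirenberg type bound for log(dμ/dν) in L^p(ν) on B
      ((ν B).toReal⁻¹ *
          ∫ x in B, |Real.log (w x) - (ν B).toReal⁻¹ * ∫ y in B, Real.log (w y) ∂ν| ^ p ∂ν)
            ^ (1 / p) ≤ C * N →
      -- reverse Hölder bound: dμ/dν ∈ B_{p'}(ν)
      ((ν B).toReal⁻¹ * ∫ x in B, w x ^ p' ∂ν) ^ (1 / p')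
          ≤ C * ((ν B).toReal⁻¹ * ∫ x in B, w x ∂ν) →
      (μ B).toReal⁻¹ *
          ∫ x in B, |(-Real.log (w x)) + (ν B).toReal⁻¹ * ∫ y in B, Real.log (w y) ∂ν| ∂μ
        ≤ C' * N := by
  have hp0 : 0 < p := lt_trans one_pos hp
  have hp'0 : 0 < p' := lt_trans one_pos hp'
  refine ⟨C ^ 2, by positivity, ?_⟩
  intro B hB hνB hμB hlog hfp hwp hJN hRH
  set a : ℝ := (ν B).toReal with ha
  set m : ℝ := (μ B).toReal with hm
  set c : ℝ := a⁻¹ * ∫ y in B, Real.log (w y) ∂ν with hc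
  set f : X → ℝ := fun x => |Real.log (w x) - c| with hf
  have hfm : AEStronglyMeasurable f (ν.restrict B) :=
    ((hwm.log.sub measurable_const).abs).aestronglyMeasurable
  -- integrability of w on B
  have hwint : IntegrableOn w B ν := by
    have hdom : Integrable (fun x => 1 + w x ^ p') (ν.restrict B) :=
      (integrable_const 1).add hwp
    refine hdom.mono' hwm.aestronglyMeasurable (ae_of_all _ fun x => ?_)
    rw [Real.norm_of_nonneg (hwpos x).le]
    rcases le_total (w x) 1 with h | h
    · have : (0:ℝ) ≤ w x ^ p' := Real.rpow_nonneg (hwpos x).le _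
      linarith
    · calc w x = w x ^ (1:ℝ) := (Real.rpow_one _).symm
        _ ≤ w x ^ p' := Real.rpow_le_rpow_of_exponent_le h hp'.le
        _ ≤ 1 + w x ^ p' := by linarith
  -- μ B in terms of the integral of w
  have hμeq : m = ∫ x in B, w x ∂ν := by
    rw [hm, hμν, withDensity_apply _ hB,
      MeasureTheory.integral_eq_lintegral_of_nonneg_ae
        (ae_of_all _ fun x => (hwpos x).le) hwm.aestronglyMeasurable]
  -- transfer integrals from μ to ν
  have hwd : μ.restrict B
      = (ν.restrict B).withDensity (fun x => ((w x).toNNReal : ENNReal)) := by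
    rw [hμν, restrict_withDensity hB]; rfl
  have htrans : (∫ x in B, |(-Real.log (w x)) + c| ∂μ) = ∫ x in B, f x * w x ∂ν := by
    rw [hwd, integral_withDensity_eq_integral_smul hwm.real_toNNReal]
    refine integral_congr_ae (ae_of_all _ fun x => ?_)
    simp only [NNReal.smul_def, Real.coe_toNNReal _ (hwpos x).le, hf]
    rw [neg_add_eq_sub, abs_sub_comm, smul_eq_mul, mul_comm]
  -- Memℒp facts for Hölder
  have hofp : (ENNReal.ofReal p) ≠ 0 := by
    simp [ENNReal.ofReal_eq_zero, not_le, hp0]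
  have hofp' : (ENNReal.ofReal p') ≠ 0 := by
    simp [ENNReal.ofReal_eq_zero, not_le, hp'0]
  have hfmem : MemLp f (ENNReal.ofReal p) (ν.restrict B) := by
    rw [← memLp_norm_rpow_iff hfm hofp ENNReal.ofReal_ne_top,
      ENNReal.div_self hofp ENNReal.ofReal_ne_top, memLp_one_iff_integrable]
    have : (fun x => ‖f x‖ ^ (ENNReal.ofReal p).toReal) = fun x => f x ^ p := by
      funext x
      rw [ENNReal.toReal_ofReal hp0.le, Real.norm_of_nonneg (abs_nonneg _)]
    rw [this]
    exact hfp
  have hwmem : MemLp w (ENNReal.ofReal p') (ν.restrict B) := by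
    rw [← memLp_norm_rpow_iff hwm.aestronglyMeasurable hofp' ENNReal.ofReal_ne_top,
      ENNReal.div_self hofp' ENNReal.ofReal_ne_top, memLp_one_iff_integrable]
    have : (fun x => ‖w x‖ ^ (ENNReal.ofReal p').toReal) = fun x => w x ^ p' := by
      funext x
      rw [ENNReal.toReal_ofReal hp'0.le, Real.norm_of_nonneg (hwpos x).le]
    rw [this]
    exact hwp
  have hconj : p.HolderConjugate p' := Real.holderConjugate_iff.mpr ⟨hp, by rw [← one_div, ← one_div]; exact hpp'⟩
  have hHolder := MeasureTheory.integral_mul_le_Lp_mul_Lq_of_nonneg hconj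
    (ae_of_all _ fun x => abs_nonneg _) (ae_of_all _ fun x => (hwpos x).le) hfmem hwmem
  -- abbreviations
  set Ip : ℝ := ∫ x in B, f x ^ p ∂ν with hIp
  set Iq : ℝ := ∫ x in B, w x ^ p' ∂ν with hIq
  have hIpnn : 0 ≤ Ip := integral_nonneg fun x => Real.rpow_nonneg (abs_nonneg _) _
  have hIqnn : 0 ≤ Iq := integral_nonneg fun x => Real.rpow_nonneg (hwpos x).le _
  have ha0 : 0 < a := hνB
  -- bound Ip^(1/p)
  have h1 : Ip ^ (1/p) ≤ a ^ (1/p) * (C * N) := by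
    have : Ip = a * (a⁻¹ * Ip) := by field_simp
    rw [this, Real.mul_rpow ha0.le (by positivity)]
    exact mul_le_mul_of_nonneg_left hJN (Real.rpow_nonneg ha0.le _)
  have h2 : Iq ^ (1/p') ≤ a ^ (1/p') * (C * (a⁻¹ * m)) := by
    have : Iq = a * (a⁻¹ * Iq) := by field_simp
    rw [this, Real.mul_rpow ha0.le (by positivity)]
    refine mul_le_mul_of_nonneg_left ?_ (Real.rpow_nonneg ha0.le _)
    rw [hμeq]
    exact hRH
  have haa : a ^ (1/p) * a ^ (1/p') = a := by
    rw [← Real.rpow_add ha0, hpp', Real.rpow_one]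
  have hmain : (∫ x in B, f x * w x ∂ν) ≤ C ^ 2 * N * m := by
    calc (∫ x in B, f x * w x ∂ν) ≤ Ip ^ (1/p) * Iq ^ (1/p') := hHolder
      _ ≤ (a ^ (1/p) * (C * N)) * (a ^ (1/p') * (C * (a⁻¹ * m))) := by
          refine mul_le_mul h1 h2 (Real.rpow_nonneg hIqnn _) ?_
          positivity
      _ = (a ^ (1/p) * a ^ (1/p')) * a⁻¹ * (C ^ 2 * N * m) := by ring
      _ = C ^ 2 * N * m := by
          rw [haa, mul_inv_cancel₀ ha0.ne', one_mul]
  rw [htrans]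
  have hm0 : 0 < m := hμB
  calc m⁻¹ * (∫ x in B, f x * w x ∂ν) ≤ m⁻¹ * (C ^ 2 * N * m) :=
        mul_le_mul_of_nonneg_left hmain (by positivity)
    _ = C ^ 2 * N := by field_simp
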